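/- The variation of information is a metric on the set of partitions of a finite set: $\mathrm{VI}(P,Q) = H(P) + H(Q) - 2I(P,Q)$ satisfies $\mathrm{VI}(P,Q) \geq 0$, $\mathrm{VI}(P,Q) = 0$ iff $P = Q$, symmetry, and the triangle inequality $\mathrm{VI}(P,R) \leq \mathrm{VI}(P,Q) + \mathrm{VI}(Q,R)$. -/

import Mathlib

open Finset

variable {S : Type*} [Fintype S] [DecidableEq S]

/-- The entropy of a partition `P` of the finite set `S`:
`H(P) = -∑_B (|B|/n) log(|B|/n)` with `n = |S|` (natural logarithm,
`0 log 0 = 0`). -/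
noncomputable def partitionEntropy (P : Finpartition (univ : Finset S)) : ℝ :=
  -∑ B ∈ P.parts, ((B.card : ℝ) / Fintype.card S) *
      Real.log ((B.card : ℝ) / Fintype.card S)

/-- The joint entropy of two partitions `P, Q` of `S`:
`H(P,Q) = -∑_{B,C} (|B∩C|/n) log(|B∩C|/n)`. -/
noncomputable def jointEntropy (P Q : Finpartition (univ : Finset S)) : ℝ :=
  -∑ B ∈ P.parts, ∑ C ∈ Q.parts,
      (((B ∩ C).card : ℝ) / Fintype.card S) *
        Real.log (((B ∩ C).card : ℝ) / Fintype.card S)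

/-- The variation of information between two partitions:
`VI(P,Q) = 2H(P,Q) - H(P) - H(Q) = H(P) + H(Q) - 2I(P,Q)`. -/
noncomputable def VI (P Q : Finpartition (univ : Finset S)) : ℝ :=
  2 * jointEntropy P Q - partitionEntropy P - partitionEntropy Q

section AuxReal

open Real

variable {ι : Type*}

private lemma sum_negMulLog_sub_negMulLog_sum (t : Finset ι) (a : ι → ℝ) :
    (∑ i ∈ t, negMulLog (a i)) - negMulLog (∑ i ∈ t, a i)
      = ∑ i ∈ t, a i * (Real.log (∑ j ∈ t, a j) - Real.log (a i)) := by
  simp only [negMulLog, neg_mul, mul_sub, Finset.sum_sub_distrib, ← Finset.sum_mul,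
    Finset.sum_neg_distrib]
  ring

private lemma term_nonneg (t : Finset ι) (a : ι → ℝ) (ha : ∀ i ∈ t, 0 ≤ a i) :
    ∀ i ∈ t, 0 ≤ a i * (Real.log (∑ j ∈ t, a j) - Real.log (a i)) := by
  intro i hi
  rcases eq_or_lt_of_le (ha i hi) with h0 | h0
  · simp [← h0]
  · have hle : a i ≤ ∑ j ∈ t, a j := Finset.single_le_sum ha hi
    have := Real.log_le_log h0 hle
    exact mul_nonneg h0.le (by linarith)

private lemma negMulLog_sum_le (t : Finset ι) (a : ι → ℝ) (ha : ∀ i ∈ t, 0 ≤ a i) :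
    negMulLog (∑ i ∈ t, a i) ≤ ∑ i ∈ t, negMulLog (a i) := by
  have h := Finset.sum_nonneg (term_nonneg t a ha)
  have h2 := sum_negMulLog_sub_negMulLog_sum t a
  linarith

private lemma negMulLog_sum_eq (t : Finset ι) (a : ι → ℝ) (ha : ∀ i ∈ t, 0 ≤ a i)
    (heq : negMulLog (∑ i ∈ t, a i) = ∑ i ∈ t, negMulLog (a i)) :
    ∀ i ∈ t, a i = 0 ∨ a i = ∑ j ∈ t, a j := by
  have h2 := sum_negMulLog_sub_negMulLog_sum t a
  rw [← heq, sub_self] at h2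
  have hz := (Finset.sum_eq_zero_iff_of_nonneg (term_nonneg t a ha)).mp h2.symm
  intro i hi
  rcases eq_or_lt_of_le (ha i hi) with h0 | h0
  · exact Or.inl h0.symm
  · right
    have := hz i hi
    have hlog : Real.log (∑ j ∈ t, a j) = Real.log (a i) := by
      have : Real.log (∑ j ∈ t, a j) - Real.log (a i) = 0 := by
        rcases mul_eq_zero.mp this with h | h
        · exact absurd h h0.ne'
        · exact h
      linarith
    have hs : 0 < ∑ j ∈ t, a j := lt_of_lt_of_le h0 (Finset.single_le_sum ha hi)
    have := Real.exp_log h0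
    rw [← hlog, Real.exp_log hs] at this
    exact this.symm

private lemma log_sum_inequality (t : Finset ι) (a b : ι → ℝ) (ha : ∀ i ∈ t, 0 ≤ a i)
    (hb : ∀ i ∈ t, 0 ≤ b i) (hab : ∀ i ∈ t, b i = 0 → a i = 0) :
    (∑ i ∈ t, a i) * Real.log ((∑ i ∈ t, a i) / (∑ i ∈ t, b i))
      ≤ ∑ i ∈ t, a i * Real.log (a i / b i) := by
  set A := ∑ i ∈ t, a i with hA
  set Bs := ∑ i ∈ t, b i with hBs
  rcases eq_or_lt_of_le (Finset.sum_nonneg ha) with hA0 | hA0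
  · have hz := (Finset.sum_eq_zero_iff_of_nonneg ha).mp hA0.symm
    rw [← hA] at hA0
    rw [← hA0, Finset.sum_congr rfl (fun i hi => by rw [hz i hi, zero_mul])]
    simp
  · rw [← hA] at hA0
    have hBs0 : 0 < Bs := by
      obtain ⟨i, hi, hai⟩ : ∃ i ∈ t, 0 < a i := by
        by_contra hc
        push_neg at hc
        have : A = 0 := le_antisymm (Finset.sum_le_sum hc |>.trans (by simp)) hA0.le
        exact absurd this hA0.ne'
      have hbi : 0 < b i := by
        rcases eq_or_lt_of_le (hb i hi) with h | h
        · exact absurd (hab i hi h.symm) hai.ne'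
        · exact h
      exact lt_of_lt_of_le hbi (Finset.single_le_sum hb hi)
    have key : ∀ i ∈ t, a i * Real.log (A / Bs) + (a i - b i * A / Bs)
        ≤ a i * Real.log (a i / b i) := by
      intro i hi
      rcases eq_or_lt_of_le (ha i hi) with h0 | h0
      · rw [← h0]
        have hb' : 0 ≤ b i := hb i hi
        have : 0 ≤ b i * A / Bs := by positivity
        simp only [zero_mul, zero_sub, zero_add]
        linarith
      · have hbi : 0 < b i := by
          rcases eq_or_lt_of_le (hb i hi) with h | h
          · exact absurd (hab i hi h.symm) h0.ne'
          · exact h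
        have hx : 0 < b i * A / (a i * Bs) := by positivity
        have hlog := Real.log_le_sub_one_of_pos hx
        have hsplit : Real.log (b i * A / (a i * Bs))
            = Real.log (A / Bs) - Real.log (a i / b i) := by
          rw [Real.log_div (by positivity) (by positivity),
              Real.log_div (ne_of_gt hA0) (ne_of_gt hBs0),
              Real.log_div (ne_of_gt h0) (ne_of_gt hbi),
              Real.log_mul (ne_of_gt hbi) (ne_of_gt hA0),
              Real.log_mul (ne_of_gt h0) (ne_of_gt hBs0)]
          ring
        rw [hsplit] at hlog
        have h2 : a i * (Real.log (A / Bs) - Real.log (a i / b i))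
            ≤ a i * (b i * A / (a i * Bs) - 1) :=
          mul_le_mul_of_nonneg_left hlog h0.le
        have h3 : a i * (b i * A / (a i * Bs) - 1) = b i * A / Bs - a i := by
          field_simp
        rw [h3] at h2
        linarith [h2]
    have hsum := Finset.sum_le_sum key
    rw [Finset.sum_add_distrib, ← Finset.sum_mul, Finset.sum_sub_distrib] at hsum
    have : ∑ i ∈ t, b i * A / Bs = A := by
      rw [← Finset.sum_div, ← Finset.sum_mul, ← hBs]
      field_simp
    rw [this] at hsum
    linarith [hsum]

private lemma mul_log_div_eq (x y : ℝ) (hx : 0 ≤ x) (hy : 0 ≤ y) (hxy : y = 0 → x = 0) :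
    x * Real.log (x / y) = x * Real.log x - x * Real.log y := by
  rcases eq_or_lt_of_le hx with h0 | h0
  · rw [← h0]; ring
  · have hy0 : 0 < y := by
      rcases eq_or_lt_of_le hy with h | h
      · exact absurd (hxy h.symm) h0.ne'
      · exact h
    rw [Real.log_div (ne_of_gt h0) (ne_of_gt hy0)]
    ring

end AuxReal

section AuxPartition

open Real

/-- The probability of a block. -/
noncomputable def pfrac (X : Finset S) : ℝ := (X.card : ℝ) / Fintype.card S

lemma pfrac_nonneg (X : Finset S) : 0 ≤ pfrac X := by
  unfold pfrac; positivity

lemma pfrac_mono {X Y : Finset S} (hXY : X ⊆ Y) : pfrac X ≤ pfrac Y := by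
  unfold pfrac
  rcases Nat.eq_zero_or_pos (Fintype.card S) with h | h
  · simp [h]
  · have hc : (0:ℝ) < Fintype.card S := by exact_mod_cast h
    gcongr
    all_goals exact_mod_cast Finset.card_le_card hXY

lemma pfrac_zero_mono {X Y : Finset S} (hXY : X ⊆ Y) (h : pfrac Y = 0) : pfrac X = 0 :=
  le_antisymm (h ▸ pfrac_mono hXY) (pfrac_nonneg X)

lemma sum_inter_card (P : Finpartition (univ : Finset S)) (X : Finset S) :
    ∑ B ∈ P.parts, ((X ∩ B).card : ℝ) = X.card := by
  rw [← Nat.cast_sum]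
  norm_cast
  rw [← Finset.card_biUnion]
  · congr 1
    ext x
    simp only [Finset.mem_biUnion, Finset.mem_inter]
    constructor
    · rintro ⟨B, _, hx, _⟩; exact hx
    · intro hx
      have hx' : x ∈ P.parts.sup id := by rw [P.sup_parts]; exact Finset.mem_univ x
      obtain ⟨B, hB, hxB⟩ := Finset.mem_sup.mp hx'
      exact ⟨B, hB, hx, hxB⟩
  · intro B hB C hC hne
    exact (P.disjoint hB hC hne).mono inf_le_right inf_le_right

lemma sum_pfrac_inter (P : Finpartition (univ : Finset S)) (X : Finset S) :
    ∑ B ∈ P.parts, pfrac (X ∩ B) = pfrac X := by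
  unfold pfrac
  rw [← Finset.sum_div, sum_inter_card]

lemma sum_pfrac_inter' (P : Finpartition (univ : Finset S)) (X : Finset S) :
    ∑ B ∈ P.parts, pfrac (B ∩ X) = pfrac X := by
  rw [Finset.sum_congr rfl (fun B _ => by rw [Finset.inter_comm]), sum_pfrac_inter]

lemma partitionEntropy_eq (P : Finpartition (univ : Finset S)) :
    partitionEntropy P = ∑ B ∈ P.parts, negMulLog (pfrac B) := by
  simp only [partitionEntropy, negMulLog, neg_mul, pfrac, Finset.sum_neg_distrib]

lemma jointEntropy_eq (P Q : Finpartition (univ : Finset S)) :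
    jointEntropy P Q = ∑ B ∈ P.parts, ∑ C ∈ Q.parts, negMulLog (pfrac (B ∩ C)) := by
  simp only [jointEntropy, negMulLog, neg_mul, pfrac, Finset.sum_neg_distrib]

lemma jointEntropy_comm (P Q : Finpartition (univ : Finset S)) :
    jointEntropy P Q = jointEntropy Q P := by
  rw [jointEntropy_eq, jointEntropy_eq, Finset.sum_comm]
  exact Finset.sum_congr rfl fun C _ => Finset.sum_congr rfl fun B _ => by
    rw [Finset.inter_comm]

lemma partitionEntropy_le_joint (P Q : Finpartition (univ : Finset S)) :
    partitionEntropy P ≤ jointEntropy P Q := by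
  rw [partitionEntropy_eq, jointEntropy_eq]
  refine Finset.sum_le_sum fun B _ => ?_
  rw [← sum_pfrac_inter Q B]
  exact negMulLog_sum_le _ _ fun C _ => pfrac_nonneg _

/-- The triple joint entropy. -/
noncomputable def tripleEntropy (P Q R : Finpartition (univ : Finset S)) : ℝ :=
  ∑ B ∈ P.parts, ∑ C ∈ Q.parts, ∑ D ∈ R.parts, negMulLog (pfrac (B ∩ C ∩ D))

lemma joint_le_triple (P Q R : Finpartition (univ : Finset S)) :
    jointEntropy P R ≤ tripleEntropy P Q R := by
  rw [jointEntropy_eq, tripleEntropy]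
  refine Finset.sum_le_sum fun B _ => ?_
  rw [Finset.sum_comm]
  refine Finset.sum_le_sum fun D _ => ?_
  have h1 : ∑ C ∈ Q.parts, negMulLog (pfrac (B ∩ C ∩ D))
      = ∑ C ∈ Q.parts, negMulLog (pfrac ((B ∩ D) ∩ C)) :=
    Finset.sum_congr rfl fun C _ => by rw [Finset.inter_right_comm]
  rw [h1, ← sum_pfrac_inter Q (B ∩ D)]
  exact negMulLog_sum_le _ _ fun C _ => pfrac_nonneg _

lemma triple_bound (P Q R : Finpartition (univ : Finset S)) :
    tripleEntropy P Q R + partitionEntropy Q ≤ jointEntropy P Q + jointEntropy Q R := by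
  have key : ∀ B ∈ P.parts, ∀ C ∈ Q.parts,
      pfrac (B ∩ C) * Real.log (pfrac (B ∩ C) / pfrac C)
        ≤ ∑ D ∈ R.parts, pfrac (B ∩ C ∩ D) * Real.log (pfrac (B ∩ C ∩ D) / pfrac (C ∩ D)) := by
    intro B _ C _
    have hs1 : ∑ D ∈ R.parts, pfrac (B ∩ C ∩ D) = pfrac (B ∩ C) := sum_pfrac_inter R (B ∩ C)
    have hs2 : ∑ D ∈ R.parts, pfrac (C ∩ D) = pfrac C := sum_pfrac_inter R C
    have := log_sum_inequality R.parts (fun D => pfrac (B ∩ C ∩ D)) (fun D => pfrac (C ∩ D))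
      (fun D _ => pfrac_nonneg _) (fun D _ => pfrac_nonneg _)
      (fun D _ h => pfrac_zero_mono
        (by intro x hx; simp only [Finset.mem_inter] at *; exact ⟨hx.1.2, hx.2⟩) h)
    rwa [hs1, hs2] at this
  have hsum : ∑ B ∈ P.parts, ∑ C ∈ Q.parts,
        pfrac (B ∩ C) * Real.log (pfrac (B ∩ C) / pfrac C)
      ≤ ∑ B ∈ P.parts, ∑ C ∈ Q.parts, ∑ D ∈ R.parts,
        pfrac (B ∩ C ∩ D) * Real.log (pfrac (B ∩ C ∩ D) / pfrac (C ∩ D)) :=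
    Finset.sum_le_sum fun B hB => Finset.sum_le_sum fun C hC => key B hB C hC
  -- rewrite LHS
  have idL : ∑ B ∈ P.parts, ∑ C ∈ Q.parts,
      pfrac (B ∩ C) * Real.log (pfrac (B ∩ C) / pfrac C)
      = -(jointEntropy P Q) + partitionEntropy Q := by
    have h1 : ∀ B ∈ P.parts, ∀ C ∈ Q.parts,
        pfrac (B ∩ C) * Real.log (pfrac (B ∩ C) / pfrac C)
        = pfrac (B ∩ C) * Real.log (pfrac (B ∩ C)) - pfrac (B ∩ C) * Real.log (pfrac C) :=
      fun B _ C _ => mul_log_div_eq _ _ (pfrac_nonneg _) (pfrac_nonneg _)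
        (fun h => pfrac_zero_mono Finset.inter_subset_right h)
    rw [Finset.sum_congr rfl (fun B hB => Finset.sum_congr rfl (fun C hC => h1 B hB C hC))]
    simp only [Finset.sum_sub_distrib]
    have h2 : ∑ B ∈ P.parts, ∑ C ∈ Q.parts, pfrac (B ∩ C) * Real.log (pfrac C)
        = ∑ C ∈ Q.parts, pfrac C * Real.log (pfrac C) := by
      rw [Finset.sum_comm]
      exact Finset.sum_congr rfl fun C _ => by
        rw [← Finset.sum_mul, sum_pfrac_inter' P C]
    rw [h2, jointEntropy_eq, partitionEntropy_eq]
    simp only [Real.negMulLog, neg_mul, Finset.sum_neg_distrib]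
    ring
  -- rewrite RHS
  have idR : ∑ B ∈ P.parts, ∑ C ∈ Q.parts, ∑ D ∈ R.parts,
      pfrac (B ∩ C ∩ D) * Real.log (pfrac (B ∩ C ∩ D) / pfrac (C ∩ D))
      = -(tripleEntropy P Q R) + jointEntropy Q R := by
    have h1 : ∀ B ∈ P.parts, ∀ C ∈ Q.parts, ∀ D ∈ R.parts,
        pfrac (B ∩ C ∩ D) * Real.log (pfrac (B ∩ C ∩ D) / pfrac (C ∩ D))
        = pfrac (B ∩ C ∩ D) * Real.log (pfrac (B ∩ C ∩ D))
            - pfrac (B ∩ C ∩ D) * Real.log (pfrac (C ∩ D)) :=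
      fun B _ C _ D _ => mul_log_div_eq _ _ (pfrac_nonneg _) (pfrac_nonneg _)
        (fun h => pfrac_zero_mono
          (by intro x hx; simp only [Finset.mem_inter] at *; exact ⟨hx.1.2, hx.2⟩) h)
    rw [Finset.sum_congr rfl (fun B hB => Finset.sum_congr rfl (fun C hC =>
      Finset.sum_congr rfl (fun D hD => h1 B hB C hC D hD)))]
    simp only [Finset.sum_sub_distrib]
    have h2 : ∑ B ∈ P.parts, ∑ C ∈ Q.parts, ∑ D ∈ R.parts,
        pfrac (B ∩ C ∩ D) * Real.log (pfrac (C ∩ D))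
        = ∑ C ∈ Q.parts, ∑ D ∈ R.parts, pfrac (C ∩ D) * Real.log (pfrac (C ∩ D)) := by
      rw [Finset.sum_comm]
      refine Finset.sum_congr rfl fun C _ => ?_
      rw [Finset.sum_comm]
      refine Finset.sum_congr rfl fun D _ => ?_
      rw [← Finset.sum_mul]
      congr 1
      have : ∑ B ∈ P.parts, pfrac (B ∩ C ∩ D) = ∑ B ∈ P.parts, pfrac ((C ∩ D) ∩ B) :=
        Finset.sum_congr rfl fun B _ => by
          congr 1
          ext x
          simp only [Finset.mem_inter]
          tauto
      rw [this, sum_pfrac_inter P (C ∩ D)]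
    rw [h2, tripleEntropy, jointEntropy_eq]
    simp only [Real.negMulLog, neg_mul, Finset.sum_neg_distrib]
    ring
  rw [idL, idR] at hsum
  linarith

end AuxPartition

section Final

open Real

lemma jointEntropy_self (P : Finpartition (univ : Finset S)) :
    jointEntropy P P = partitionEntropy P := by
  rw [jointEntropy_eq, partitionEntropy_eq]
  refine Finset.sum_congr rfl fun B hB => ?_
  rw [Finset.sum_eq_single_of_mem B hB]
  · rw [Finset.inter_self]
  · intro C hC hne
    have hd : B ∩ C = ∅ :=
      Finset.disjoint_iff_inter_eq_empty.mp (P.disjoint hB hC (Ne.symm hne))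
    simp [hd, pfrac]

lemma le_of_joint_eq (P Q : Finpartition (univ : Finset S)) (hn : Fintype.card S ≠ 0)
    (h : jointEntropy P Q = partitionEntropy P) : P ≤ Q := by
  intro B hB
  have hterm : ∀ B' ∈ P.parts,
      0 ≤ (∑ C ∈ Q.parts, negMulLog (pfrac (B' ∩ C))) - negMulLog (pfrac B') := by
    intro B' _
    have := negMulLog_sum_le Q.parts (fun C => pfrac (B' ∩ C)) (fun C _ => pfrac_nonneg _)
    rw [sum_pfrac_inter Q B'] at this
    linarith
  have hsum0 : ∑ B' ∈ P.parts,
      ((∑ C ∈ Q.parts, negMulLog (pfrac (B' ∩ C))) - negMulLog (pfrac B')) = 0 := by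
    rw [Finset.sum_sub_distrib, ← jointEntropy_eq, ← partitionEntropy_eq, h, sub_self]
  have hz := (Finset.sum_eq_zero_iff_of_nonneg hterm).mp hsum0
  have heq : negMulLog (∑ C ∈ Q.parts, pfrac (B ∩ C))
      = ∑ C ∈ Q.parts, negMulLog (pfrac (B ∩ C)) := by
    rw [sum_pfrac_inter Q B]
    have := hz B hB
    linarith
  have hcases := negMulLog_sum_eq Q.parts (fun C => pfrac (B ∩ C))
    (fun C _ => pfrac_nonneg _) heq
  have hcn : (Fintype.card S : ℝ) ≠ 0 := Nat.cast_ne_zero.mpr hn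
  have hBpos : 0 < pfrac B := by
    have hne : B.Nonempty := Finset.nonempty_iff_ne_empty.mpr (P.ne_bot hB)
    have h1 : 0 < B.card := Finset.card_pos.mpr hne
    have h2 : 0 < (Fintype.card S : ℝ) := by
      exact_mod_cast Nat.pos_of_ne_zero hn
    exact div_pos (by exact_mod_cast h1) h2
  obtain ⟨C, hC, hpos⟩ : ∃ C ∈ Q.parts, 0 < pfrac (B ∩ C) := by
    by_contra hc
    push_neg at hc
    have hall : ∀ C ∈ Q.parts, pfrac (B ∩ C) = 0 :=
      fun C hC => le_antisymm (hc C hC) (pfrac_nonneg _)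
    have hs : ∑ C ∈ Q.parts, pfrac (B ∩ C) = 0 := Finset.sum_eq_zero hall
    rw [sum_pfrac_inter Q B] at hs
    exact hBpos.ne' hs
  rcases hcases C hC with h0 | hEq
  · exact absurd h0 hpos.ne'
  · rw [sum_pfrac_inter Q B] at hEq
    have hcard : ((B ∩ C).card : ℝ) = B.card := by
      unfold pfrac at hEq
      field_simp at hEq
      exact_mod_cast hEq
    have hBC : B ∩ C = B :=
      Finset.eq_of_subset_of_card_le Finset.inter_subset_left
        (by exact_mod_cast le_of_eq hcard.symm)
    exact ⟨C, hC, Finset.le_iff_subset.mpr (Finset.inter_eq_left.mp hBC)⟩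


/-- The variation of information is a metric on the set of partitions of a
finite set: it is nonnegative, vanishes exactly when the partitions coincide, is
symmetric, and satisfies the triangle inequality. -/
theorem VI_is_metric :
    (∀ P Q : Finpartition (univ : Finset S), 0 ≤ VI P Q) ∧
      (∀ P Q : Finpartition (univ : Finset S), VI P Q = 0 ↔ P = Q) ∧
      (∀ P Q : Finpartition (univ : Finset S), VI P Q = VI Q P) ∧
      (∀ P Q R : Finpartition (univ : Finset S), VI P R ≤ VI P Q + VI Q R) := by
  have nonneg : ∀ P Q : Finpartition (univ : Finset S), 0 ≤ VI P Q := by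
    intro P Q
    have h1 := partitionEntropy_le_joint P Q
    have h2 : partitionEntropy Q ≤ jointEntropy P Q := by
      rw [jointEntropy_comm]; exact partitionEntropy_le_joint Q P
    unfold VI
    linarith
  refine ⟨nonneg, ?_, ?_, ?_⟩
  · intro P Q
    constructor
    · intro h
      by_cases hn : Fintype.card S = 0
      · have hu : (univ : Finset S) = ⊥ := by
          rw [bot_eq_empty, ← Finset.card_eq_zero, Finset.card_univ]
          exact hn
        have hP : P.parts = ∅ := Finpartition.parts_eq_empty_iff.mpr hu
        have hQ : Q.parts = ∅ := Finpartition.parts_eq_empty_iff.mpr hu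
        refine le_antisymm ?_ ?_ <;> intro b hb <;> simp [hP, hQ] at hb
      · have h1 := partitionEntropy_le_joint P Q
        have h2 : partitionEntropy Q ≤ jointEntropy P Q := by
          rw [jointEntropy_comm]; exact partitionEntropy_le_joint Q P
        unfold VI at h
        have hP : jointEntropy P Q = partitionEntropy P := by linarith
        have hQ : jointEntropy Q P = partitionEntropy Q := by
          rw [← jointEntropy_comm]; linarith
        exact le_antisymm (le_of_joint_eq P Q hn hP) (le_of_joint_eq Q P hn hQ)
    · rintro rfl
      unfold VI
      rw [jointEntropy_self]
      ring
  · intro P Q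
    unfold VI
    rw [jointEntropy_comm]
    ring
  · intro P Q R
    have h1 := joint_le_triple P Q R
    have h2 := triple_bound P Q R
    unfold VI
    linarith

end Final
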